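/- Let 𝔤 be a finite-dimensional Lie algebra over ℝ and 𝔥 ⊆ 𝔤 a Lie subalgebra. Then the following are equivalent: (i) there exists a ∈ (𝔤/𝔥)* such that ind 𝔥^a + codim_{(𝔤/𝔥)*} O_a = ind 𝔤; (ii) ind(𝔥 ⋉ (𝔤/𝔥)) = ind 𝔤. -/

import Mathlib

open Module

/-! Infrastructure: the index of a Lie algebra, the semidirect product `𝔥 ⋉ M` of a Lie
algebra and a module (the module being regarded as an abelian Lie algebra), the `𝔥`-module
`𝔤/𝔥` for a Lie subalgebra `𝔥 ⊆ 𝔤`, and the coadjoint action of `𝔥` on `(𝔤/𝔥)*`. -/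

section Index

variable (K : Type*) [Field K]

/-- The stabilizer `𝔩^f = {x ∈ 𝔩 : f(⁅x,y⁆) = 0 for all y}` of a linear functional `f` on a
Lie algebra `𝔩`, as a subspace of `𝔩`. -/
def lieCoadStabilizer (L : Type*) [LieRing L] [LieAlgebra K L] (f : Module.Dual K L) :
    Submodule K L where
  carrier := {x | ∀ y, f ⁅x, y⁆ = 0}
  add_mem' := by
    intro a b ha hb y
    rw [add_lie, map_add, ha y, hb y, add_zero]
  zero_mem' := by
    intro y
    rw [zero_lie, map_zero]
  smul_mem' := by
    intro c x hx y
    rw [smul_lie, map_smul, hx y, smul_zero]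

/-- The index of a Lie algebra `𝔩`: the minimal dimension of the stabilizer `𝔩^f` over all
linear functionals `f ∈ 𝔩*`. -/
noncomputable def lieIndex (L : Type*) [LieRing L] [LieAlgebra K L] : ℕ :=
  sInf {n | ∃ f : Module.Dual K L, n = Module.finrank K (lieCoadStabilizer K L f)}

end Index

section SemidirectProduct

variable (K : Type*) [CommRing K]
variable (L : Type*) [LieRing L] [LieAlgebra K L]
variable (M : Type*) [AddCommGroup M] [Module K M] [LieRingModule L M] [LieModule K L M]

/-- The semidirect product `L ⋉ M` of a Lie algebra `L` and an `L`-module `M` regarded as an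
abelian Lie algebra, with bracket `⁅(x,u),(y,w)⁆ = (⁅x,y⁆, ⁅x,w⁆ − ⁅y,u⁆)`. -/
def LieSemidirect (L M : Type*) := L × M

namespace LieSemidirect

instance : AddCommGroup (LieSemidirect L M) := inferInstanceAs (AddCommGroup (L × M))
instance : Module K (LieSemidirect L M) := inferInstanceAs (Module K (L × M))

instance : LieRing (LieSemidirect L M) :=
  { (inferInstance : AddCommGroup (LieSemidirect L M)) with
    bracket := fun p q => (⁅p.1, q.1⁆, ⁅p.1, q.2⁆ - ⁅q.1, p.2⁆)
    add_lie := fun p q r => by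
      refine Prod.ext (add_lie _ _ _) ?_
      show ⁅p.1 + q.1, r.2⁆ - ⁅r.1, p.2 + q.2⁆ =
        (⁅p.1, r.2⁆ - ⁅r.1, p.2⁆) + (⁅q.1, r.2⁆ - ⁅r.1, q.2⁆)
      rw [add_lie, lie_add]; abel
    lie_add := fun p q r => by
      refine Prod.ext (lie_add _ _ _) ?_
      show ⁅p.1, q.2 + r.2⁆ - ⁅q.1 + r.1, p.2⁆ =
        (⁅p.1, q.2⁆ - ⁅q.1, p.2⁆) + (⁅p.1, r.2⁆ - ⁅r.1, p.2⁆)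
      rw [lie_add, add_lie]; abel
    lie_self := fun p => by
      refine Prod.ext (lie_self _) ?_
      show ⁅p.1, p.2⁆ - ⁅p.1, p.2⁆ = (0 : M)
      abel
    leibniz_lie := fun p q r => by
      refine Prod.ext (leibniz_lie _ _ _) ?_
      show ⁅p.1, ⁅q.1, r.2⁆ - ⁅r.1, q.2⁆⁆ - ⁅⁅q.1, r.1⁆, p.2⁆ =
        (⁅⁅p.1, q.1⁆, r.2⁆ - ⁅r.1, ⁅p.1, q.2⁆ - ⁅q.1, p.2⁆⁆) +
        (⁅q.1, ⁅p.1, r.2⁆ - ⁅r.1, p.2⁆⁆ - ⁅⁅p.1, r.1⁆, q.2⁆)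
      simp only [lie_sub, sub_lie, lie_lie]
      abel }

instance : LieAlgebra K (LieSemidirect L M) where
  lie_smul t p q := by
    refine Prod.ext (lie_smul _ _ _) ?_
    show ⁅p.1, (t • q).2⁆ - ⁅(t • q).1, p.2⁆ = t • (⁅p.1, q.2⁆ - ⁅q.1, p.2⁆)
    show ⁅p.1, t • q.2⁆ - ⁅t • q.1, p.2⁆ = _
    rw [lie_smul, smul_lie, smul_sub]

end LieSemidirect

end SemidirectProduct

section QuotientModule

variable (K : Type*) [Field K]
variable (L : Type*) [LieRing L] [LieAlgebra K L]
variable (H : LieSubalgebra K L)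

/-- A Lie subalgebra `𝔥 ⊆ 𝔤`, regarded as a Lie submodule of `𝔤` over `𝔥`. -/
def LieSubalgebra.asLieSubmodule : LieSubmodule K H L :=
  { H.toSubmodule with
    lie_mem := fun {x} {_} hm => H.lie_mem x.2 hm }

/-- The quotient `𝔤/𝔥` as an `𝔥`-module, with `x·(v+𝔥) = ⁅x,v⁆+𝔥`. -/
abbrev LieSubalgebra.quotientModule := L ⧸ H.asLieSubmodule K L

variable (a : Module.Dual K (LieSubalgebra.quotientModule K L H))

/-- The coadjoint action map `x ↦ x·a`, `(x·a)(w) = −a(⁅x,w⁆)`, of `𝔥` on `(𝔤/𝔥)*`;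
its range is the tangent space to the coadjoint orbit `O_a`. -/
noncomputable def lieCoadMap :
    H →ₗ[K] Module.Dual K (LieSubalgebra.quotientModule K L H) where
  toFun x := -(a ∘ₗ LieModule.toEnd K H (LieSubalgebra.quotientModule K L H) x)
  map_add' x y := by
    ext w
    simp
    abel
  map_smul' c x := by
    ext w
    simp

lemma lieCoadMap_eq_zero_iff (x : H) :
    lieCoadMap K L H a x = 0 ↔ ∀ w, a ⁅x, w⁆ = 0 := by
  constructor
  · intro h w
    have := LinearMap.congr_fun h w
    simpa [lieCoadMap] using this
  · intro h
    ext w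
    simpa [lieCoadMap] using h w

/-- The stabilizer `𝔥^a = {x ∈ 𝔥 : x·a = 0}` of `a ∈ (𝔤/𝔥)*` under the coadjoint action,
as a Lie subalgebra of `𝔥`. -/
noncomputable def lieCoadIsotropy : LieSubalgebra K H :=
  { LinearMap.ker (lieCoadMap K L H a) with
    lie_mem' := by
      intro x y hx hy
      have hx' : lieCoadMap K L H a x = 0 := hx
      have hy' : lieCoadMap K L H a y = 0 := hy
      rw [lieCoadMap_eq_zero_iff] at hx' hy'
      show ⁅x, y⁆ ∈ LinearMap.ker (lieCoadMap K L H a)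
      rw [LinearMap.mem_ker, lieCoadMap_eq_zero_iff]
      intro w
      rw [lie_lie, map_sub, hx' ⁅y, w⁆, hy' ⁅x, w⁆, sub_zero] }

end QuotientModule


section AuxIndex
variable {L : Type*} [LieRing L] [LieAlgebra ℝ L]

lemma mem_lieCoadStabilizer (f : Module.Dual ℝ L) (x : L) :
    x ∈ lieCoadStabilizer ℝ L f ↔ ∀ y, f ⁅x, y⁆ = 0 := Iff.rfl

lemma lieIndex_le (f : Module.Dual ℝ L) :
    lieIndex ℝ L ≤ finrank ℝ (lieCoadStabilizer ℝ L f) :=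
  Nat.sInf_le ⟨f, rfl⟩

lemma exists_lieIndex_eq :
    ∃ f : Module.Dual ℝ L, lieIndex ℝ L = finrank ℝ (lieCoadStabilizer ℝ L f) :=
  Nat.sInf_mem (s := {n | ∃ f : Module.Dual ℝ L, n = finrank ℝ (lieCoadStabilizer ℝ L f)})
    ⟨_, 0, rfl⟩

/-- The map `x ↦ (y ↦ f ⁅x,y⁆)`. -/
noncomputable def adDualMap (f : Module.Dual ℝ L) : L →ₗ[ℝ] Module.Dual ℝ L where
  toFun x :=
    { toFun := fun y => f ⁅x, y⁆
      map_add' := fun y z => by simp only [lie_add, map_add]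
      map_smul' := fun c y => by simp only [lie_smul, map_smul]; rfl }
  map_add' x y := by ext z; simp [add_lie]
  map_smul' c x := by ext z; simp [smul_lie]

@[simp] lemma adDualMap_apply (f : Module.Dual ℝ L) (x y : L) :
    adDualMap f x y = f ⁅x, y⁆ := rfl

lemma ker_adDualMap (f : Module.Dual ℝ L) :
    LinearMap.ker (adDualMap f) = lieCoadStabilizer ℝ L f := by
  ext x
  simp only [LinearMap.mem_ker, mem_lieCoadStabilizer]
  constructor
  · intro h y
    have := LinearMap.congr_fun h y
    simpa using this
  · intro h
    ext y
    simpa using h y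

lemma finrank_stab_add_rank [FiniteDimensional ℝ L] (f : Module.Dual ℝ L) :
    finrank ℝ (lieCoadStabilizer ℝ L f) + finrank ℝ (LinearMap.range (adDualMap f))
      = finrank ℝ L := by
  rw [← ker_adDualMap]
  rw [add_comm]
  exact LinearMap.finrank_range_add_finrank_ker _

end AuxIndex

set_option linter.unusedSectionVars false

section AuxLinear
variable {E : Type*} [AddCommGroup E] [Module ℝ E] [FiniteDimensional ℝ E]

/-- Linearly independent functionals admit a dual family of vectors. -/
lemma exists_dual_vectors {r : ℕ} (w : Fin r → Module.Dual ℝ E)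
    (hw : LinearIndependent ℝ w) :
    ∃ v : Fin r → E, ∀ i j, w i (v j) = if i = j then 1 else 0 := by
  set T : E →ₗ[ℝ] (Fin r → ℝ) := LinearMap.pi w with hT
  have hsurj : Function.Surjective T := by
    have h1 : ∀ i, T.dualMap (LinearMap.proj i) = w i := by
      intro i; ext x; rfl
    have h2 : Submodule.span ℝ (Set.range w) ≤ LinearMap.range T.dualMap := by
      rw [Submodule.span_le]
      rintro - ⟨i, rfl⟩
      exact ⟨LinearMap.proj i, h1 i⟩
    have h3 : r ≤ finrank ℝ (LinearMap.range T.dualMap) := by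
      have := Submodule.finrank_mono h2
      rwa [finrank_span_eq_card hw, Fintype.card_fin] at this
    have h4 : finrank ℝ (LinearMap.range T) = r := by
      have := T.finrank_range_dualMap_eq_finrank_range
      have h5 : finrank ℝ (LinearMap.range T) ≤ r := by
        have := Submodule.finrank_le (LinearMap.range T)
        rwa [Module.finrank_pi, Fintype.card_fin] at this
      omega
    rw [← LinearMap.range_eq_top]
    apply Submodule.eq_top_of_finrank_eq
    rw [h4, Module.finrank_pi, Fintype.card_fin]
  choose v hv using fun j => hsurj (Pi.single j 1)
  refine ⟨v, fun i j => ?_⟩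
  have := congr_fun (hv j) i
  simp only [hT, LinearMap.pi_apply] at this
  rw [this, Pi.single_apply]

end AuxLinear

section AuxMinor
variable {E : Type*} [LieRing E] [LieAlgebra ℝ E] [FiniteDimensional ℝ E]

lemma exists_minor (f : Module.Dual ℝ E) :
    ∃ (r : ℕ) (e v : Fin r → E),
      (Matrix.of fun i j => f ⁅e i, v j⁆).det ≠ 0 ∧
        finrank ℝ (lieCoadStabilizer ℝ E f) + r = finrank ℝ E := by
  obtain ⟨U, hU⟩ := Submodule.exists_isCompl (LinearMap.ker (adDualMap f))
  set r := finrank ℝ U with hr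
  let bU : Basis (Fin r) ℝ U := Module.finBasis ℝ U
  have h1 : LinearIndependent ℝ (fun i => (bU i : E)) :=
    bU.linearIndependent.map' U.subtype U.ker_subtype
  have hspan : Submodule.span ℝ (Set.range fun i => (bU i : E)) = U := by
    have : (Set.range fun i => (bU i : E)) = U.subtype '' Set.range bU := by
      rw [← Set.range_comp]; rfl
    rw [this, Submodule.span_image, bU.span_eq, Submodule.map_subtype_top]
  have hind : LinearIndependent ℝ (fun i => adDualMap f (bU i : E)) := by
    have hdisj : Disjoint (Submodule.span ℝ (Set.range fun i => (bU i : E)))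
        (LinearMap.ker (adDualMap f)) := by
      rw [hspan]
      exact hU.disjoint.symm
    exact h1.map hdisj
  obtain ⟨v, hv⟩ := exists_dual_vectors _ hind
  refine ⟨r, fun i => (bU i : E), v, ?_, ?_⟩
  · have hM : (Matrix.of fun i j => f ⁅(bU i : E), v j⁆) = (1 : Matrix (Fin r) (Fin r) ℝ) := by
      ext i j
      have h2 : f ⁅(bU i : E), v j⁆ = adDualMap f (bU i : E) (v j) := rfl
      rw [Matrix.of_apply, h2, hv i j, Matrix.one_apply]
    rw [hM, Matrix.det_one]
    exact one_ne_zero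
  · have := Submodule.finrank_add_eq_of_isCompl hU
    rw [ker_adDualMap] at this
    exact this

lemma finrank_stab_le_of_det_ne_zero (f : Module.Dual ℝ E) {r : ℕ} (e v : Fin r → E)
    (h : (Matrix.of fun i j => f ⁅e i, v j⁆).det ≠ 0) :
    finrank ℝ (lieCoadStabilizer ℝ E f) + r ≤ finrank ℝ E := by
  set M : Matrix (Fin r) (Fin r) ℝ := Matrix.of fun i j => f ⁅e i, v j⁆ with hMdef
  set Θ : E →ₗ[ℝ] (Fin r → ℝ) := LinearMap.pi fun j => (adDualMap f).flip (v j) with hΘdef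
  have hΘ : ∀ (x : E) (j : Fin r), Θ x j = f ⁅x, v j⁆ := fun x j => rfl
  have hsurj : Function.Surjective Θ := by
    intro y
    have hM : IsUnit M.det := isUnit_iff_ne_zero.mpr h
    set c := Matrix.vecMul y M⁻¹ with hc
    refine ⟨∑ i, c i • e i, ?_⟩
    have h2 : Θ (∑ i, c i • e i) = ∑ i, c i • Θ (e i) := by
      rw [map_sum]
      simp only [map_smul]
    funext j
    have h3 : (∑ i, c i • Θ (e i)) j = ∑ i, c i * M i j := by
      simp only [Finset.sum_apply, Pi.smul_apply, smul_eq_mul]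
      refine Finset.sum_congr rfl fun i _ => ?_
      rw [hΘ]
      rfl
    have h4 : Matrix.vecMul c M = y := by
      rw [hc, Matrix.vecMul_vecMul, Matrix.nonsing_inv_mul M hM, Matrix.vecMul_one]
    have h5 : Matrix.vecMul c M j = ∑ i, c i * M i j := by
      simp [Matrix.vecMul, dotProduct]
    rw [h2, h3, ← h5, h4]
  have hk : lieCoadStabilizer ℝ E f ≤ LinearMap.ker Θ := by
    intro x hx
    rw [LinearMap.mem_ker]
    funext j
    rw [hΘ]
    exact (mem_lieCoadStabilizer f x).mp hx (v j)
  have h1 := LinearMap.finrank_range_add_finrank_ker Θ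
  have h2 : finrank ℝ (LinearMap.range Θ) = r := by
    rw [LinearMap.range_eq_top.mpr hsurj, finrank_top, Module.finrank_pi, Fintype.card_fin]
  have h3 := Submodule.finrank_mono hk
  omega

end AuxMinor

lemma exists_t_det_ne_zero {r : ℕ} (A B C : Matrix (Fin r) (Fin r) ℝ) (hA : A.det ≠ 0) :
    ∃ t : ℝ, t ≠ 0 ∧ (A + t • B + (t * t) • C).det ≠ 0 := by
  classical
  set P : Matrix (Fin r) (Fin r) (Polynomial ℝ) :=
    Matrix.of fun i j => Polynomial.C (A i j) + Polynomial.C (B i j) * Polynomial.X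
      + Polynomial.C (C i j) * (Polynomial.X * Polynomial.X) with hPdef
  have hev : ∀ t : ℝ, (Polynomial.evalRingHom t).mapMatrix P = A + t • B + (t * t) • C := by
    intro t
    ext i j
    simp only [hPdef, RingHom.mapMatrix_apply, Matrix.map_apply, Matrix.of_apply, map_add,
      map_mul, Polynomial.eval_add, Polynomial.eval_mul, Polynomial.eval_C, Polynomial.eval_X,
      Polynomial.coe_evalRingHom, Matrix.add_apply, Matrix.smul_apply, smul_eq_mul]
    ring
  have hdet : ∀ t : ℝ, (P.det).eval t = (A + t • B + (t * t) • C).det := by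
    intro t
    have h1 := (Polynomial.evalRingHom t).map_det P
    rw [hev t] at h1
    simpa using h1
  have hP : P.det ≠ 0 := by
    intro h0
    have h1 := hdet 0
    rw [h0] at h1
    simp only [Polynomial.eval_zero, zero_smul, add_zero, mul_zero] at h1
    exact hA h1.symm
  have hq : (Polynomial.X * P.det) ≠ 0 := mul_ne_zero Polynomial.X_ne_zero hP
  by_contra hcon
  push_neg at hcon
  apply hq
  apply Polynomial.zero_of_eval_zero
  intro t
  by_cases ht : t = 0
  · simp [ht]
  · rw [Polynomial.eval_mul, Polynomial.eval_X, hdet t, hcon t ht, mul_zero]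

section Concrete

variable (𝔤 : Type*) [LieRing 𝔤] [LieAlgebra ℝ 𝔤] [FiniteDimensional ℝ 𝔤]
variable (H : LieSubalgebra ℝ 𝔤)

/-- Abbreviation for the quotient module. -/
abbrev QV := LieSubalgebra.quotientModule ℝ 𝔤 H

/-- Abbreviation for the semidirect product. -/
abbrev SD := LieSemidirect ↥H (LieSubalgebra.quotientModule ℝ 𝔤 H)


instance : FiniteDimensional ℝ H := inferInstanceAs (FiniteDimensional ℝ H.toSubmodule)
instance : FiniteDimensional ℝ (LieSubalgebra.quotientModule ℝ 𝔤 H) := by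
  unfold LieSubalgebra.quotientModule
  infer_instance
instance : FiniteDimensional ℝ (LieSemidirect H (LieSubalgebra.quotientModule ℝ 𝔤 H)) :=
  inferInstanceAs (FiniteDimensional ℝ (H × LieSubalgebra.quotientModule ℝ 𝔤 H))

lemma S_bracket (p q : (SD 𝔤 H)) :
    ⁅p, q⁆ = ((⁅p.1, q.1⁆, ⁅p.1, q.2⁆ - ⁅q.1, p.2⁆) : ↥H × (QV 𝔤 H)) := rfl

variable {𝔤 H}

lemma mem_iso (a : Module.Dual ℝ (QV 𝔤 H)) (x : ↥H) :
    x ∈ lieCoadIsotropy ℝ 𝔤 H a ↔ ∀ w : (QV 𝔤 H), a ⁅x, w⁆ = 0 := by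
  have h1 : x ∈ lieCoadIsotropy ℝ 𝔤 H a ↔ lieCoadMap ℝ 𝔤 H a x = 0 := by
    exact LinearMap.mem_ker
  rw [h1, lieCoadMap_eq_zero_iff]

/-- The transpose coadjoint map `u ↦ (y ↦ a ⁅y, u⁆)`. -/
noncomputable def PhiMap (a : Module.Dual ℝ (QV 𝔤 H)) : (QV 𝔤 H) →ₗ[ℝ] Module.Dual ℝ ↥H where
  toFun u :=
    { toFun := fun y => a ⁅y, u⁆
      map_add' := fun y z => by simp only [add_lie, map_add]
      map_smul' := fun c y => by simp only [smul_lie, map_smul]; rfl }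
  map_add' u w := by ext y; simp [lie_add]
  map_smul' c u := by ext y; simp [lie_smul]

@[simp] lemma PhiMap_apply (a : Module.Dual ℝ (QV 𝔤 H)) (u : (QV 𝔤 H)) (y : ↥H) :
    PhiMap a u y = a ⁅y, u⁆ := rfl

lemma PhiMap_eq (a : Module.Dual ℝ (QV 𝔤 H)) :
    PhiMap a = -(((lieCoadMap ℝ 𝔤 H a).dualMap).comp (Module.Dual.eval ℝ (QV 𝔤 H))) := by
  ext u y
  simp only [PhiMap_apply, LinearMap.neg_apply, LinearMap.comp_apply,
    LinearMap.dualMap_apply, Module.Dual.eval_apply, lieCoadMap, LinearMap.coe_mk,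
    AddHom.coe_mk]
  simp [LieModule.toEnd_apply_apply]

lemma range_eval_top : LinearMap.range (Module.Dual.eval ℝ (QV 𝔤 H)) = ⊤ := by
  rw [← Module.evalEquiv_toLinearMap]
  exact LinearMap.range_eq_top.mpr (Module.evalEquiv ℝ (QV 𝔤 H)).surjective

lemma range_PhiMap (a : Module.Dual ℝ (QV 𝔤 H)) :
    LinearMap.range (PhiMap a) =
      Submodule.dualAnnihilator (lieCoadIsotropy ℝ 𝔤 H a).toSubmodule := by
  rw [PhiMap_eq, LinearMap.range_neg, LinearMap.range_comp_of_range_eq_top _ range_eval_top,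
    LinearMap.range_dualMap_eq_dualAnnihilator_ker]
  rfl

lemma finrank_range_PhiMap (a : Module.Dual ℝ (QV 𝔤 H)) :
    finrank ℝ (LinearMap.range (PhiMap a)) =
      finrank ℝ (LinearMap.range (lieCoadMap ℝ 𝔤 H a)) := by
  rw [PhiMap_eq, LinearMap.range_neg, LinearMap.range_comp_of_range_eq_top _ range_eval_top,
    LinearMap.finrank_range_dualMap_eq_finrank_range]


lemma mem_stab_SD (f : Module.Dual ℝ (SD 𝔤 H)) (φ : Module.Dual ℝ ↥H)
    (a : Module.Dual ℝ (QV 𝔤 H)) (hf : ∀ p : ↥H × QV 𝔤 H, f p = φ p.1 + a p.2)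
    (p : SD 𝔤 H) :
    p ∈ lieCoadStabilizer ℝ (SD 𝔤 H) f ↔
      ((∀ w : QV 𝔤 H, a ⁅p.1, w⁆ = 0) ∧ (∀ y : ↥H, φ ⁅p.1, y⁆ = a ⁅y, p.2⁆)) := by
  rw [mem_lieCoadStabilizer]
  constructor
  · intro h
    constructor
    · intro w
      have h1 := h (((0 : ↥H), w) : ↥H × QV 𝔤 H)
      erw [S_bracket, hf] at h1
      simpa using h1
    · intro y
      have h1 := h ((y, (0 : QV 𝔤 H)) : ↥H × QV 𝔤 H)
      erw [S_bracket, hf] at h1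
      simp only [lie_zero, zero_sub, map_neg, map_zero] at h1
      linarith
  · rintro ⟨h1, h2⟩ q
    rw [S_bracket, hf]
    simp only [map_sub]
    rw [h1 q.2, h2 q.1]
    ring

set_option maxHeartbeats 2000000 in
lemma star_lemma (f : Module.Dual ℝ (SD 𝔤 H)) (φ : Module.Dual ℝ ↥H)
    (a : Module.Dual ℝ (QV 𝔤 H)) (hf : ∀ p : ↥H × QV 𝔤 H, f p = φ p.1 + a p.2)
    (g : Module.Dual ℝ ↥(lieCoadIsotropy ℝ 𝔤 H a))
    (hg : ∀ x : ↥(lieCoadIsotropy ℝ 𝔤 H a), g x = φ x.1) :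
    finrank ℝ (lieCoadStabilizer ℝ (SD 𝔤 H) f)
        + finrank ℝ (LinearMap.range (lieCoadMap ℝ 𝔤 H a))
      = finrank ℝ (lieCoadStabilizer ℝ (↥(lieCoadIsotropy ℝ 𝔤 H a)) g)
        + finrank ℝ (QV 𝔤 H) := by
  classical
  have key1 : ∀ p : SD 𝔤 H, p ∈ lieCoadStabilizer ℝ (SD 𝔤 H) f →
      p.1 ∈ lieCoadIsotropy ℝ 𝔤 H a := by
    intro p hp
    rw [mem_iso]
    exact ((mem_stab_SD f φ a hf p).mp hp).1
  have key2 : ∀ (p : SD 𝔤 H) (hp : p ∈ lieCoadStabilizer ℝ (SD 𝔤 H) f),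
      (⟨p.1, key1 p hp⟩ : ↥(lieCoadIsotropy ℝ 𝔤 H a)) ∈
        lieCoadStabilizer ℝ (↥(lieCoadIsotropy ℝ 𝔤 H a)) g := by
    intro p hp
    rw [mem_lieCoadStabilizer]
    intro y
    rw [hg]
    have h2 := ((mem_stab_SD f φ a hf p).mp hp).2
    have h3 : ((⁅(⟨p.1, key1 p hp⟩ : ↥(lieCoadIsotropy ℝ 𝔤 H a)), y⁆ :
        ↥(lieCoadIsotropy ℝ 𝔤 H a)) : ↥H) = ⁅p.1, (y : ↥H)⁆ := rfl
    rw [h3, h2 (y : ↥H)]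
    have h4 : (y : ↥H) ∈ lieCoadIsotropy ℝ 𝔤 H a := y.2
    rw [mem_iso] at h4
    exact h4 p.2
  let P : ↥(lieCoadStabilizer ℝ (SD 𝔤 H) f) →ₗ[ℝ]
      ↥(lieCoadStabilizer ℝ (↥(lieCoadIsotropy ℝ 𝔤 H a)) g) :=
    { toFun := fun z => ⟨⟨(z : SD 𝔤 H).1, key1 _ z.2⟩, key2 _ z.2⟩
      map_add' := fun z w => Subtype.ext (Subtype.ext rfl)
      map_smul' := fun c z => Subtype.ext (Subtype.ext rfl) }
  have hPsurj : Function.Surjective P := by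
    intro z
    have hξ : (adDualMap φ ((z : ↥(lieCoadIsotropy ℝ 𝔤 H a)) : ↥H) : Module.Dual ℝ ↥H) ∈
        LinearMap.range (PhiMap a) := by
      rw [range_PhiMap, Submodule.mem_dualAnnihilator]
      intro y hy
      have h6 := z.2
      rw [mem_lieCoadStabilizer] at h6
      have h7 := h6 ⟨y, hy⟩
      rw [hg] at h7
      exact h7
    obtain ⟨u, hu⟩ := hξ
    have hp : ((((z : ↥(lieCoadIsotropy ℝ 𝔤 H a)) : ↥H), u) : ↥H × QV 𝔤 H) ∈
        lieCoadStabilizer ℝ (SD 𝔤 H) f := by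
      erw [mem_stab_SD f φ a hf]
      constructor
      · intro w
        have h8 := (z : ↥(lieCoadIsotropy ℝ 𝔤 H a)).2
        rw [mem_iso] at h8
        exact h8 w
      · intro y
        have h9 := LinearMap.congr_fun hu y
        simpa using h9.symm
    refine ⟨⟨_, hp⟩, ?_⟩
    apply Subtype.ext
    apply Subtype.ext
    rfl
  have hker : ∀ z : ↥(lieCoadStabilizer ℝ (SD 𝔤 H) f),
      P z = 0 ↔ ((z : SD 𝔤 H)).1 = 0 := by
    intro z
    constructor
    · intro h
      exact congr_arg (fun w => (((w : ↥(lieCoadStabilizer ℝ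
        (↥(lieCoadIsotropy ℝ 𝔤 H a)) g)) : ↥(lieCoadIsotropy ℝ 𝔤 H a)) : ↥H)) h
    · intro h
      apply Subtype.ext
      apply Subtype.ext
      exact h
  let E : ↥(LinearMap.ker P) ≃ₗ[ℝ] ↥(LinearMap.ker (PhiMap a)) :=
    { toFun := fun z => ⟨((z : ↥(lieCoadStabilizer ℝ (SD 𝔤 H) f)) : SD 𝔤 H).2, by
        have hz0 : ((z : ↥(lieCoadStabilizer ℝ (SD 𝔤 H) f)) : SD 𝔤 H).1 = 0 :=
          (hker _).mp z.2
        have h2 := ((mem_stab_SD f φ a hf _).mp (z : ↥(lieCoadStabilizer ℝ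
          (SD 𝔤 H) f)).2).2
        rw [LinearMap.mem_ker]
        ext y
        have h3 := h2 y
        rw [hz0] at h3
        simp only [zero_lie, map_zero] at h3
        simpa using h3.symm⟩
      map_add' := fun z w => rfl
      map_smul' := fun c z => rfl
      invFun := fun u => ⟨⟨(((0 : ↥H), (u : QV 𝔤 H)) : ↥H × QV 𝔤 H), by
          erw [mem_stab_SD f φ a hf]
          refine ⟨fun w => by simp, fun y => ?_⟩
          have h4 := u.2
          rw [LinearMap.mem_ker] at h4
          have h5 := LinearMap.congr_fun h4 y
          simp only [PhiMap_apply, LinearMap.zero_apply] at h5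
          simp [h5]⟩, by
        rw [LinearMap.mem_ker, hker]⟩
      left_inv := fun z => by
        apply Subtype.ext
        apply Subtype.ext
        have hz0 : ((z : ↥(lieCoadStabilizer ℝ (SD 𝔤 H) f)) : SD 𝔤 H).1 = 0 :=
          (hker _).mp z.2
        exact Prod.ext hz0.symm rfl
      right_inv := fun u => rfl }
  have hrn1 := LinearMap.finrank_range_add_finrank_ker P
  have hrn2 := LinearMap.finrank_range_add_finrank_ker (PhiMap (𝔤 := 𝔤) (H := H) a)
  have h6 : finrank ℝ (LinearMap.range P) =
      finrank ℝ (lieCoadStabilizer ℝ (↥(lieCoadIsotropy ℝ 𝔤 H a)) g) := by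
    rw [LinearMap.range_eq_top.mpr hPsurj, finrank_top]
  have h7 : finrank ℝ (LinearMap.ker P) = finrank ℝ (LinearMap.ker (PhiMap a)) :=
    E.finrank_eq
  have h8 := finrank_range_PhiMap (𝔤 := 𝔤) (H := H) a
  omega


set_option maxHeartbeats 2000000 in
lemma lieIndex_le_stab_SD (f : Module.Dual ℝ (SD 𝔤 H)) :
    lieIndex ℝ 𝔤 ≤ finrank ℝ (lieCoadStabilizer ℝ (SD 𝔤 H) f) := by
  classical
  obtain ⟨r, e, v, hdet, hsum⟩ := exists_minor (E := SD 𝔤 H) f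
  -- a linear section of the quotient map
  set π : 𝔤 →ₗ[ℝ] (QV 𝔤 H) := ((H.asLieSubmodule ℝ 𝔤) : Submodule ℝ 𝔤).mkQ with hπdef
  obtain ⟨s, hs⟩ := π.exists_rightInverse_of_surjective
    (LinearMap.range_eq_top.mpr (Submodule.mkQ_surjective _))
  have hsπ : ∀ u, π (s u) = u := fun u => LinearMap.congr_fun hs u
  -- decomposition of f
  set φ : Module.Dual ℝ ↥H := f.comp ((LinearMap.inl ℝ ↥H (QV 𝔤 H) : _ →ₗ[ℝ] ↥H × QV 𝔤 H)
    : ↥H →ₗ[ℝ] SD 𝔤 H) with hφdef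
  set a : Module.Dual ℝ (QV 𝔤 H) := f.comp ((LinearMap.inr ℝ ↥H (QV 𝔤 H)
    : _ →ₗ[ℝ] ↥H × QV 𝔤 H) : QV 𝔤 H →ₗ[ℝ] SD 𝔤 H) with hadef
  have hfφa : ∀ p : ↥H × QV 𝔤 H, f p = φ p.1 + a p.2 := by
    intro p
    have h1 : ((p.1, (0 : QV 𝔤 H)) : ↥H × QV 𝔤 H) + ((0 : ↥H), p.2) = p := by
      ext
      · simp
      · simp
    calc f p = f (((p.1, (0 : QV 𝔤 H)) : ↥H × QV 𝔤 H) + ((0 : ↥H), p.2)) := by rw [h1]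
    _ = φ p.1 + a p.2 := by erw [map_add]; rfl
  -- the H-equivariance of π
  have hπlie : ∀ (x : ↥H) (z : 𝔤), π ⁅(x : 𝔤), z⁆ = ⁅x, π z⁆ := fun x z => rfl
  have hπH : ∀ z : 𝔤, z ∈ H.toSubmodule → π z = 0 := by
    intro z hz
    exact (Submodule.Quotient.mk_eq_zero
      ((H.asLieSubmodule ℝ 𝔤) : Submodule ℝ 𝔤)).mpr hz
  -- the projection onto H along the section
  have hmem : ∀ z : 𝔤, z - s (π z) ∈ H.toSubmodule := by
    intro z
    have h1 : π (z - s (π z)) = 0 := by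
      rw [map_sub, hsπ, sub_self]
    exact (Submodule.Quotient.mk_eq_zero
      ((H.asLieSubmodule ℝ 𝔤) : Submodule ℝ 𝔤)).mp h1
  set qH : 𝔤 →ₗ[ℝ] ↥H :=
    (LinearMap.codRestrict H.toSubmodule (LinearMap.id - s ∘ₗ π) hmem
      : 𝔤 →ₗ[ℝ] ↥(H.toSubmodule)) with hqdef
  have hqH : ∀ z : 𝔤, (qH z : 𝔤) = z - s (π z) := fun z => rfl
  have hqH' : ∀ x y : ↥H, qH ⁅(x : 𝔤), (y : 𝔤)⁆ = ⁅x, y⁆ := by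
    intro x y
    apply Subtype.ext
    rw [hqH]
    have h1 : π ⁅(x : 𝔤), (y : 𝔤)⁆ = 0 :=
      hπH _ (H.lie_mem x.2 y.2)
    rw [h1, map_zero, sub_zero]
    rfl
  set ψ : Module.Dual ℝ 𝔤 := φ.comp qH with hψdef
  have hψ : ∀ x y : ↥H, ψ ⁅(x : 𝔤), (y : 𝔤)⁆ = φ ⁅x, y⁆ := by
    intro x y
    rw [hψdef, LinearMap.comp_apply, hqH' x y]
  -- the perturbation forms
  set Qb : (SD 𝔤 H) → (SD 𝔤 H) → ℝ := fun p p' =>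
    ψ ⁅(p.1 : 𝔤), s p'.2⁆ + ψ ⁅s p.2, (p'.1 : 𝔤)⁆ + a (π ⁅s p.2, s p'.2⁆) with hQbdef
  set Rb : (SD 𝔤 H) → (SD 𝔤 H) → ℝ := fun p p' => ψ ⁅s p.2, s p'.2⁆ with hRbdef
  obtain ⟨t, ht, hdet'⟩ := exists_t_det_ne_zero
    (Matrix.of fun i j => f ⁅e i, v j⁆)
    (Matrix.of fun i j => Qb (e i) (v j))
    (Matrix.of fun i j => Rb (e i) (v j)) hdet
  set ft : Module.Dual ℝ 𝔤 := ψ + t⁻¹ • (a ∘ₗ π) with hftdef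
  have hft : ∀ z : 𝔤, ft z = ψ z + t⁻¹ * a (π z) := by
    intro z
    rw [hftdef]
    simp
  -- the key computation
  have key : ∀ p p' : SD 𝔤 H,
      ft ⁅(p.1 : 𝔤) + t • s p.2, (p'.1 : 𝔤) + t • s p'.2⁆
        = f ⁅p, p'⁆ + t * Qb p p' + (t * t) * Rb p p' := by
    intro p p'
    have hbr4 : ⁅(p.1 : 𝔤) + t • s p.2, (p'.1 : 𝔤) + t • s p'.2⁆
        = ⁅(p.1 : 𝔤), (p'.1 : 𝔤)⁆ + t • ⁅(p.1 : 𝔤), s p'.2⁆ + t • ⁅s p.2, (p'.1 : 𝔤)⁆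
          + (t * t) • ⁅s p.2, s p'.2⁆ := by
      simp only [add_lie, lie_add, lie_smul, smul_lie, smul_add, smul_smul]
      abel
    rw [hbr4, hft]
    simp only [map_add, map_smul, smul_eq_mul]
    have h1 : π ⁅(p.1 : 𝔤), (p'.1 : 𝔤)⁆ = 0 := hπH _ (H.lie_mem p.1.2 p'.1.2)
    have h2 : π ⁅(p.1 : 𝔤), s p'.2⁆ = ⁅p.1, p'.2⁆ := by rw [hπlie, hsπ]
    have h3 : π ⁅s p.2, (p'.1 : 𝔤)⁆ = -⁅p'.1, p.2⁆ := by
      rw [← lie_skew, map_neg, hπlie, hsπ]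
    have h4 : f ⁅p, p'⁆ = φ ⁅p.1, p'.1⁆ + a ⁅p.1, p'.2⁆ - a ⁅p'.1, p.2⁆ := by
      rw [S_bracket, hfφa]
      simp only [map_sub]
      ring
    rw [h1, h2, h3, hψ, h4, hQbdef, hRbdef]
    simp only [map_zero, map_neg]
    field_simp
    ring
  -- transfer the minor
  have hmat : (Matrix.of fun i j => f ⁅e i, v j⁆) + t • (Matrix.of fun i j => Qb (e i) (v j))
      + (t * t) • (Matrix.of fun i j => Rb (e i) (v j))
      = Matrix.of fun i j =>
          ft ⁅((e i).1 : 𝔤) + t • s (e i).2, ((v j).1 : 𝔤) + t • s (v j).2⁆ := by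
    ext i j
    simp only [Matrix.add_apply, Matrix.smul_apply, Matrix.of_apply, smul_eq_mul]
    rw [key]
  rw [hmat] at hdet'
  have hbound := finrank_stab_le_of_det_ne_zero (E := 𝔤) ft
    (fun i => ((e i).1 : 𝔤) + t • s (e i).2) (fun j => ((v j).1 : 𝔤) + t • s (v j).2) hdet'
  have hineq := lieIndex_le (L := 𝔤) ft
  -- dimensions agree
  have hd1 : finrank ℝ (SD 𝔤 H) = finrank ℝ ↥H + finrank ℝ (QV 𝔤 H) := by
    exact Module.finrank_prod
  have hd2 : finrank ℝ (QV 𝔤 H) + finrank ℝ ↥H = finrank ℝ 𝔤 := by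
    exact Submodule.finrank_quotient_add_finrank
      ((H.asLieSubmodule ℝ 𝔤) : Submodule ℝ 𝔤)
  omega



lemma exists_decomp (f : Module.Dual ℝ (SD 𝔤 H)) :
    ∃ (φ : Module.Dual ℝ ↥H) (a : Module.Dual ℝ (QV 𝔤 H)),
      ∀ p : ↥H × QV 𝔤 H, f p = φ p.1 + a p.2 := by
  refine ⟨f.comp ((LinearMap.inl ℝ ↥H (QV 𝔤 H) : _ →ₗ[ℝ] ↥H × QV 𝔤 H)
      : ↥H →ₗ[ℝ] SD 𝔤 H),
    f.comp ((LinearMap.inr ℝ ↥H (QV 𝔤 H) : _ →ₗ[ℝ] ↥H × QV 𝔤 H)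
      : QV 𝔤 H →ₗ[ℝ] SD 𝔤 H), fun p => ?_⟩
  have h1 : ((p.1, (0 : QV 𝔤 H)) : ↥H × QV 𝔤 H) + ((0 : ↥H), p.2) = p := by
    ext
    · simp
    · simp
  calc f p = f (((p.1, (0 : QV 𝔤 H)) : ↥H × QV 𝔤 H) + ((0 : ↥H), p.2)) := by rw [h1]
  _ = _ := by erw [map_add]; rfl

lemma exists_f_for (a : Module.Dual ℝ (QV 𝔤 H))
    (g : Module.Dual ℝ ↥(lieCoadIsotropy ℝ 𝔤 H a)) :
    ∃ f : Module.Dual ℝ (SD 𝔤 H),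
      finrank ℝ (lieCoadStabilizer ℝ (SD 𝔤 H) f)
          + finrank ℝ (LinearMap.range (lieCoadMap ℝ 𝔤 H a))
        = finrank ℝ (lieCoadStabilizer ℝ (↥(lieCoadIsotropy ℝ 𝔤 H a)) g)
          + finrank ℝ (QV 𝔤 H) := by
  obtain ⟨φ, hφ⟩ := LinearMap.exists_extend
    (p := (lieCoadIsotropy ℝ 𝔤 H a).toSubmodule)
    (g : ↥((lieCoadIsotropy ℝ 𝔤 H a).toSubmodule) →ₗ[ℝ] ℝ)
  set f : Module.Dual ℝ (SD 𝔤 H) :=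
    (φ.comp ((LinearMap.fst ℝ ↥H (QV 𝔤 H) : _ →ₗ[ℝ] ↥H) : SD 𝔤 H →ₗ[ℝ] ↥H))
      + (a.comp ((LinearMap.snd ℝ ↥H (QV 𝔤 H) : _ →ₗ[ℝ] QV 𝔤 H)
        : SD 𝔤 H →ₗ[ℝ] QV 𝔤 H)) with hfdef
  have hf : ∀ p : ↥H × QV 𝔤 H, f p = φ p.1 + a p.2 := fun p => rfl
  have hg : ∀ x : ↥(lieCoadIsotropy ℝ 𝔤 H a), g x = φ x.1 :=
    fun x => (LinearMap.congr_fun hφ x).symm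
  exact ⟨f, star_lemma f φ a hf g hg⟩

lemma rank_coad_le (a : Module.Dual ℝ (QV 𝔤 H)) :
    finrank ℝ (LinearMap.range (lieCoadMap ℝ 𝔤 H a)) ≤ finrank ℝ (QV 𝔤 H) := by
  have h1 := Submodule.finrank_le (LinearMap.range (lieCoadMap ℝ 𝔤 H a))
  rwa [Subspace.dual_finrank_eq] at h1


end Concrete


/-- the Raïs-type criterion, Lemma 4.3 of the paper.  Let `𝔤` be a
finite-dimensional real Lie algebra and `𝔥 ⊆ 𝔤` a Lie subalgebra.  The following are
equivalent: (i) there exists `a ∈ (𝔤/𝔥)*` with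
`ind 𝔥^a + codim_{(𝔤/𝔥)*} O_a = ind 𝔤`; (ii) `ind (𝔥 ⋉ (𝔤/𝔥)) = ind 𝔤`. -/
theorem exists_coad_index_eq_iff_index_semidirect_eq
    (𝔤 : Type*) [LieRing 𝔤] [LieAlgebra ℝ 𝔤] [FiniteDimensional ℝ 𝔤]
    (H : LieSubalgebra ℝ 𝔤) :
    (∃ a : Module.Dual ℝ (LieSubalgebra.quotientModule ℝ 𝔤 H),
        lieIndex ℝ (lieCoadIsotropy ℝ 𝔤 H a) +
          (finrank ℝ (Module.Dual ℝ (LieSubalgebra.quotientModule ℝ 𝔤 H)) -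
            finrank ℝ (LinearMap.range (lieCoadMap ℝ 𝔤 H a))) =
          lieIndex ℝ 𝔤) ↔
      lieIndex ℝ (LieSemidirect H (LieSubalgebra.quotientModule ℝ 𝔤 H)) = lieIndex ℝ 𝔤 := by
  have hD : finrank ℝ (Module.Dual ℝ (LieSubalgebra.quotientModule ℝ 𝔤 H))
      = finrank ℝ (QV 𝔤 H) := Subspace.dual_finrank_eq
  constructor
  · rintro ⟨a, ha⟩
    obtain ⟨g, hgmin⟩ := exists_lieIndex_eq (L := ↥(lieCoadIsotropy ℝ 𝔤 H a))
    obtain ⟨f, hfstar⟩ := exists_f_for a g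
    have hA : lieIndex ℝ (SD 𝔤 H) ≤ finrank ℝ (lieCoadStabilizer ℝ (SD 𝔤 H) f) :=
      lieIndex_le f
    have hρ := rank_coad_le a
    obtain ⟨f₀, hf₀⟩ := exists_lieIndex_eq (L := SD 𝔤 H)
    have hF1 : lieIndex ℝ 𝔤 ≤ lieIndex ℝ (SD 𝔤 H) := by
      rw [hf₀]
      exact lieIndex_le_stab_SD f₀
    have hgoal : lieIndex ℝ (SD 𝔤 H) = lieIndex ℝ 𝔤 := by omega
    exact hgoal
  · intro hS
    obtain ⟨f, hfmin⟩ := exists_lieIndex_eq (L := SD 𝔤 H)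
    obtain ⟨φ, a, hf⟩ := exists_decomp f
    set g : Module.Dual ℝ ↥(lieCoadIsotropy ℝ 𝔤 H a) :=
      (φ.comp ((lieCoadIsotropy ℝ 𝔤 H a).toSubmodule.subtype)
        : ↥((lieCoadIsotropy ℝ 𝔤 H a).toSubmodule) →ₗ[ℝ] ℝ) with hgdef
    have hg : ∀ x : ↥(lieCoadIsotropy ℝ 𝔤 H a), g x = φ x.1 := fun x => rfl
    have hstar := star_lemma f φ a hf g hg
    have hgge : lieIndex ℝ ↥(lieCoadIsotropy ℝ 𝔤 H a)
        ≤ finrank ℝ (lieCoadStabilizer ℝ (↥(lieCoadIsotropy ℝ 𝔤 H a)) g) :=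
      lieIndex_le g
    obtain ⟨g', hg'min⟩ := exists_lieIndex_eq (L := ↥(lieCoadIsotropy ℝ 𝔤 H a))
    obtain ⟨f', hf'star⟩ := exists_f_for a g'
    have hF : lieIndex ℝ 𝔤 ≤ finrank ℝ (lieCoadStabilizer ℝ (SD 𝔤 H) f') :=
      lieIndex_le_stab_SD f'
    have hρ := rank_coad_le a
    refine ⟨a, ?_⟩
    have hS' : lieIndex ℝ (SD 𝔤 H) = lieIndex ℝ 𝔤 := hS
    omega
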